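/- Let G and G₀ be cdfs of probability distributions on [0,1] with G₀(x) = max(0, min(1, 2x - 1/2)), and suppose there exists z ∈ (0,1) and ε > 0 with |G(z) - G₀(z)| ≥ ε. Let H(x) = G₀(x) - G(x). Then ∫₀¹ H(x)² dx ≥ ε³/6. -/

import Mathlib

open MeasureTheory Set

/-- The cdf of the uniform distribution on `[1/4, 3/4]`. -/
noncomputable def G₀ (x : ℝ) : ℝ := max 0 (min 1 (2 * x - 1/2))

lemma G0_mono : Monotone G₀ := fun a b h =>
  max_le_max le_rfl (min_le_min le_rfl (by linarith))

lemma G0_mem (x : ℝ) : G₀ x ∈ Icc (0:ℝ) 1 :=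
  ⟨le_max_left _ _, max_le zero_le_one (min_le_left _ _)⟩

lemma G0_cont : Continuous G₀ :=
  continuous_const.max (continuous_const.min (by continuity))

lemma G0_lip {a b : ℝ} (h : a ≤ b) : G₀ b ≤ G₀ a + 2 * (b - a) := by
  unfold G₀
  simp only [max_def, min_def]
  split_ifs <;> linarith

lemma key_int1 (ε c : ℝ) :
    ∫ x in c..(c + ε/2), (ε - 2 * (x - c))^2 = ε^3 / 6 := by
  have h : ∀ x ∈ uIcc c (c + ε/2),
      HasDerivAt (fun x => -(ε - 2 * (x - c))^3 / 6) ((ε - 2 * (x - c))^2) x := by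
    intro x _
    have h0 : HasDerivAt (fun x : ℝ => 2 * (x - c)) 2 x := by
      simpa using ((hasDerivAt_id x).sub_const c).const_mul 2
    have h1 : HasDerivAt (fun x : ℝ => ε - 2 * (x - c)) (-2) x := h0.const_sub ε
    have h2 : HasDerivAt (fun x => -(ε - 2 * (x - c))^3 / 6) _ x := ((h1.pow 3).neg).div_const 6
    convert h2 using 1
    norm_num
    ring
  have := intervalIntegral.integral_eq_sub_of_hasDerivAt h
    (by apply Continuous.intervalIntegrable; fun_prop)
  rw [this]
  ring

lemma key_int2 (ε c : ℝ) :
    ∫ x in (c - ε/2)..c, (ε - 2 * (c - x))^2 = ε^3 / 6 := by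
  have h : ∀ x ∈ uIcc (c - ε/2) c,
      HasDerivAt (fun x => (ε - 2 * (c - x))^3 / 6) ((ε - 2 * (c - x))^2) x := by
    intro x _
    have h0 : HasDerivAt (fun x : ℝ => 2 * (c - x)) (-2) x := by
      simpa using ((hasDerivAt_id x).const_sub c).const_mul 2
    have h1 : HasDerivAt (fun x : ℝ => ε - 2 * (c - x)) 2 x := by
      simpa using h0.const_sub ε
    have h2 : HasDerivAt (fun x => (ε - 2 * (c - x))^3 / 6) _ x := (h1.pow 3).div_const 6
    convert h2 using 1
    norm_num
    ring
  have := intervalIntegral.integral_eq_sub_of_hasDerivAt h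
    (by apply Continuous.intervalIntegrable; fun_prop)
  rw [this]
  ring

/-- If a nondecreasing `G : [0,1] → [0,1]` differs from `G₀` by at least `ε` at some
point `z ∈ (0,1)`, then `∫₀¹ (G₀(x) - G(x))² dx ≥ ε³/6`. -/
theorem stmt_7 (G : ℝ → ℝ) (hmono : MonotoneOn G (Icc (0:ℝ) 1))
    (hrange : ∀ x ∈ Icc (0:ℝ) 1, G x ∈ Icc (0:ℝ) 1)
    (z : ℝ) (hz : z ∈ Ioo (0:ℝ) 1) (ε : ℝ) (hε : 0 < ε)
    (hdiff : ε ≤ |G z - G₀ z|) :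
    ε^3 / 6 ≤ ∫ x in (0:ℝ)..1, (G₀ x - G x)^2 := by
  -- the monotone extension of `G` to all of `ℝ`
  set G' : ℝ → ℝ := fun x => G (min 1 (max 0 x)) with hG'def
  have hproj : ∀ x : ℝ, min 1 (max 0 x) ∈ Icc (0:ℝ) 1 := fun x =>
    ⟨le_min zero_le_one (le_max_left _ _), min_le_left _ _⟩
  have hG'mono : Monotone G' := fun a b h =>
    hmono (hproj a) (hproj b) (min_le_min le_rfl (max_le_max le_rfl h))
  have hG'eq : ∀ x ∈ Icc (0:ℝ) 1, G' x = G x := by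
    intro x hx
    simp only [hG'def, max_eq_right hx.1, min_eq_right hx.2]
  have hG'range : ∀ x, G' x ∈ Icc (0:ℝ) 1 := fun x => hrange _ (hproj x)
  have hzmem : z ∈ Icc (0:ℝ) 1 := ⟨hz.1.le, hz.2.le⟩
  -- replace G by G' in the integral
  have hcongr : (∫ x in (0:ℝ)..1, (G₀ x - G x)^2)
      = ∫ x in (0:ℝ)..1, (G₀ x - G' x)^2 := by
    apply intervalIntegral.integral_congr
    intro x hx
    rw [uIcc_of_le (by norm_num : (0:ℝ) ≤ 1)] at hx
    dsimp only
    rw [hG'eq x hx]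
  rw [hcongr]
  -- integrability of the squared difference
  have hmeas : Measurable fun x => (G₀ x - G' x)^2 :=
    ((G0_cont.measurable).sub hG'mono.measurable).pow_const 2
  have hbound : ∀ x, (G₀ x - G' x)^2 ≤ 1 := by
    intro x
    have h1 := G0_mem x
    have h2 := hG'range x
    nlinarith [h1.1, h1.2, h2.1, h2.2]
  have hInt : ∀ a b : ℝ, IntervalIntegrable (fun x => (G₀ x - G' x)^2) volume a b := by
    intro a b
    rw [intervalIntegrable_iff]
    apply Integrable.mono' (g := fun _ => (1:ℝ))
    · exact integrableOn_const measure_Ioc_lt_top.ne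
    · exact hmeas.aestronglyMeasurable.restrict
    · filter_upwards with x
      rw [Real.norm_eq_abs, abs_of_nonneg (sq_nonneg _)]
      exact hbound x
  have hεle1 : ε ≤ 1 := by
    have h1 := G0_mem z
    have h2 := hrange z hzmem
    have habs : |G z - G₀ z| ≤ 1 :=
      abs_le.mpr ⟨by linarith [h2.1, h1.2], by linarith [h2.2, h1.1]⟩
    linarith
  -- the generic step: a subinterval [a,b] ⊆ [0,1] with a pointwise lower bound
  have hstep : ∀ a b : ℝ, 0 ≤ a → a ≤ b → b ≤ 1 →
      (∫ x in a..b, (G₀ x - G' x)^2) ≤ ∫ x in (0:ℝ)..1, (G₀ x - G' x)^2 := by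
    intro a b ha hab hb
    have e1 : (∫ x in (0:ℝ)..a, (G₀ x - G' x)^2) + (∫ x in a..b, (G₀ x - G' x)^2)
        = ∫ x in (0:ℝ)..b, (G₀ x - G' x)^2 :=
      intervalIntegral.integral_add_adjacent_intervals (hInt 0 a) (hInt a b)
    have e2 : (∫ x in (0:ℝ)..b, (G₀ x - G' x)^2) + (∫ x in b..(1:ℝ), (G₀ x - G' x)^2)
        = ∫ x in (0:ℝ)..1, (G₀ x - G' x)^2 :=
      intervalIntegral.integral_add_adjacent_intervals (hInt 0 b) (hInt b 1)
    have n1 : 0 ≤ ∫ x in (0:ℝ)..a, (G₀ x - G' x)^2 :=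
      intervalIntegral.integral_nonneg ha (fun x _ => sq_nonneg _)
    have n2 : 0 ≤ ∫ x in b..(1:ℝ), (G₀ x - G' x)^2 :=
      intervalIntegral.integral_nonneg hb (fun x _ => sq_nonneg _)
    linarith
  rcases le_abs.mp hdiff with hA | hB
  · -- Case A : ε ≤ G z - G₀ z, work on [z, z + ε/2]
    have hzb : z + ε/2 ≤ 1 := by
      have h2 := hrange z hzmem
      have hm : min 1 (2 * z - 1/2) ≤ G₀ z := le_max_right _ _
      rcases min_cases 1 (2 * z - 1/2) with ⟨he, _⟩ | ⟨he, _⟩ <;>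
        rw [he] at hm <;> linarith [h2.2]
    have hpt : ∀ x ∈ Icc z (z + ε/2),
        (ε - 2 * (x - z))^2 ≤ (G₀ x - G' x)^2 := by
      intro x hx
      have h1 : G z ≤ G' x := by
        rw [← hG'eq z hzmem]; exact hG'mono hx.1
      have h2 : G₀ x ≤ G₀ z + 2 * (x - z) := G0_lip hx.1
      have h3 : ε - 2 * (x - z) ≤ G' x - G₀ x := by linarith
      have h4 : 0 ≤ ε - 2 * (x - z) := by linarith [hx.2]
      have := sq_le_sq' (by linarith : -(G' x - G₀ x) ≤ ε - 2 * (x - z)) h3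
      calc (ε - 2 * (x - z))^2 ≤ (G' x - G₀ x)^2 := this
        _ = (G₀ x - G' x)^2 := by ring
    calc ε^3 / 6 = ∫ x in z..(z + ε/2), (ε - 2 * (x - z))^2 := (key_int1 ε z).symm
      _ ≤ ∫ x in z..(z + ε/2), (G₀ x - G' x)^2 := by
          apply intervalIntegral.integral_mono_on (by linarith)
            (by apply Continuous.intervalIntegrable; fun_prop)
            (hInt _ _) hpt
      _ ≤ ∫ x in (0:ℝ)..1, (G₀ x - G' x)^2 :=
          hstep z (z + ε/2) hz.1.le (by linarith) hzb
  · -- Case B : ε ≤ G₀ z - G z, work on [z - ε/2, z]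
    have hB' : ε ≤ G₀ z - G z := by linarith
    have hza : 0 ≤ z - ε/2 := by
      have h2 := hrange z hzmem
      have : ε ≤ G₀ z := by linarith [h2.1]
      have hm : ε ≤ min 1 (2 * z - 1/2) := by
        rcases max_cases (0:ℝ) (min 1 (2 * z - 1/2)) with ⟨he, _⟩ | ⟨he, _⟩ <;>
          unfold G₀ at this <;> rw [he] at this <;> linarith
      have := min_le_right (1:ℝ) (2 * z - 1/2)
      linarith [hm.trans this]
    have hpt : ∀ x ∈ Icc (z - ε/2) z,
        (ε - 2 * (z - x))^2 ≤ (G₀ x - G' x)^2 := by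
      intro x hx
      have h1 : G' x ≤ G z := by
        rw [← hG'eq z hzmem]; exact hG'mono hx.2
      have h2 : G₀ z ≤ G₀ x + 2 * (z - x) := G0_lip hx.2
      have h3 : ε - 2 * (z - x) ≤ G₀ x - G' x := by linarith
      have h4 : 0 ≤ ε - 2 * (z - x) := by linarith [hx.1]
      exact sq_le_sq' (by linarith : -(G₀ x - G' x) ≤ ε - 2 * (z - x)) h3
    calc ε^3 / 6 = ∫ x in (z - ε/2)..z, (ε - 2 * (z - x))^2 := (key_int2 ε z).symm
      _ ≤ ∫ x in (z - ε/2)..z, (G₀ x - G' x)^2 := by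
          apply intervalIntegral.integral_mono_on (by linarith)
            (by apply Continuous.intervalIntegrable; fun_prop)
            (hInt _ _) hpt
      _ ≤ ∫ x in (0:ℝ)..1, (G₀ x - G' x)^2 :=
          hstep (z - ε/2) z hza (by linarith) hz.2.le
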